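/- Let ε ∈ (0,1] and let πE, πO, πG, π̂E, π̂O, π̂G, μE1, μE0, μS1, μS0, μY1, μY0 be real numbers with 0 ≤ πE ≤ 1, 0 ≤ πG ≤ 1, 0 ≤ π̂E ≤ 1, 0 ≤ π̂G ≤ 1, and ε ≤ π̂E, ε ≤ 1−π̂E, ε ≤ π̂G, ε ≤ 1−πG, ε ≤ π̂O, ε ≤ 1−π̂O. Define P := (πE·πG·(1−π̂G)/(π̂E·(1−πG)·π̂G))·μE1 − ((1−πE)·(1−π̂G)·πG/((1−π̂E)·(1−πG)·π̂G))·μE0 + (πO/π̂O)·(μY1 − μS1) − ((1−πO)/(1−π̂O))·(μY0 − μS0) and τ := μY1 − μY0 + μE1 − μE0 + μS0 − μS1. Then |P − τ| ≤ ε⁻³·(|πE − π̂E| + |πG − π̂G|)·(|μE1| + |μE0|) + ε⁻¹·|πO − π̂O|·(|μY1 − μS1| + |μY0 − μS0|). -/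

import Mathlib

/-- Pointwise bias bound for the propensity-based two-stage estimator
(Corollary 1). -/
theorem stmt_10
    (ε : ℝ) (hε : ε ∈ Set.Ioc (0 : ℝ) 1)
    (πE πO πG πE' πO' πG' : ℝ)
    (μE1 μE0 μS1 μS0 μY1 μY0 : ℝ)
    (hπE0 : 0 ≤ πE) (hπE1 : πE ≤ 1)
    (hπG0 : 0 ≤ πG) (hπG1 : πG ≤ 1)
    (hπE'0 : 0 ≤ πE') (hπE'1 : πE' ≤ 1)
    (hπG'0 : 0 ≤ πG') (hπG'1 : πG' ≤ 1)
    (h1 : ε ≤ πE') (h2 : ε ≤ 1 - πE')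
    (h3 : ε ≤ πG') (h4 : ε ≤ 1 - πG)
    (h5 : ε ≤ πO') (h6 : ε ≤ 1 - πO')
    (P τ : ℝ)
    (hP : P = (πE * πG * (1 - πG') / (πE' * (1 - πG) * πG')) * μE1
      - ((1 - πE) * (1 - πG') * πG / ((1 - πE') * (1 - πG) * πG')) * μE0
      + (πO / πO') * (μY1 - μS1)
      - ((1 - πO) / (1 - πO')) * (μY0 - μS0))
    (hτ : τ = μY1 - μY0 + μE1 - μE0 + μS0 - μS1) :
    |P - τ| ≤ ε⁻¹ ^ 3 * (|πE - πE'| + |πG - πG'|) * (|μE1| + |μE0|)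
      + ε⁻¹ * |πO - πO'| * (|μY1 - μS1| + |μY0 - μS0|) := by
  obtain ⟨hε0, hε1⟩ := hε
  have hE' : (0:ℝ) < πE' := lt_of_lt_of_le hε0 h1
  have hE'' : (0:ℝ) < 1 - πE' := lt_of_lt_of_le hε0 h2
  have hG' : (0:ℝ) < πG' := lt_of_lt_of_le hε0 h3
  have hG : (0:ℝ) < 1 - πG := lt_of_lt_of_le hε0 h4
  have hO' : (0:ℝ) < πO' := lt_of_lt_of_le hε0 h5
  have hO'' : (0:ℝ) < 1 - πO' := lt_of_lt_of_le hε0 h6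
  set d1 : ℝ := πE * πG * (1 - πG') / (πE' * (1 - πG) * πG') - 1 with hd1def
  set d0 : ℝ := (1 - πE) * (1 - πG') * πG / ((1 - πE') * (1 - πG) * πG') - 1 with hd0def
  set d2 : ℝ := πO / πO' - 1 with hd2def
  set d3 : ℝ := (1 - πO) / (1 - πO') - 1 with hd3def
  have hdecomp : P - τ = d1 * μE1 - d0 * μE0 + (d2 * (μY1 - μS1) - d3 * (μY0 - μS0)) := by
    rw [hP, hτ, hd1def, hd0def, hd2def, hd3def]; ring
  set K : ℝ := ε⁻¹ ^ 3 * (|πE - πE'| + |πG - πG'|) with hKdef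
  set L : ℝ := ε⁻¹ * |πO - πO'| with hLdef
  have hε3 : (0:ℝ) < ε ^ 3 := by positivity
  -- bound on d1
  have hb1 : |d1| ≤ K := by
    have hd1 : d1 = ((πE - πE') * (πG * (1 - πG')) + πE' * (πG - πG'))
        / (πE' * (1 - πG) * πG') := by
      rw [hd1def]
      field_simp
      ring
    have hnum : |(πE - πE') * (πG * (1 - πG')) + πE' * (πG - πG')|
        ≤ |πE - πE'| + |πG - πG'| := by
      have h01 : 0 ≤ πG * (1 - πG') := mul_nonneg hπG0 (by linarith)
      have h02 : πG * (1 - πG') ≤ 1 := mul_le_one₀ hπG1 (by linarith) (by linarith)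
      have t1 : |(πE - πE') * (πG * (1 - πG'))| ≤ |πE - πE'| := by
        rw [abs_mul]
        exact mul_le_of_le_one_right (abs_nonneg _)
          (by rw [abs_of_nonneg h01]; exact h02)
      have t2 : |πE' * (πG - πG')| ≤ |πG - πG'| := by
        rw [abs_mul]
        exact mul_le_of_le_one_left (abs_nonneg _)
          (by rw [abs_of_nonneg (le_of_lt hE')]; exact hπE'1)
      exact (abs_add_le _ _).trans (add_le_add t1 t2)
    have hden : ε ^ 3 ≤ πE' * (1 - πG) * πG' := by
      calc ε ^ 3 = ε * ε * ε := by ring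
        _ ≤ πE' * (1 - πG) * πG' :=
            mul_le_mul (mul_le_mul h1 h4 hε0.le hE'.le) h3 hε0.le (by positivity)
    rw [hd1, abs_div, abs_of_pos (by positivity : (0:ℝ) < πE' * (1 - πG) * πG')]
    rw [hKdef, inv_pow, ← div_eq_inv_mul]
    exact div_le_div₀ (by positivity) hnum hε3 hden
  -- bound on d0
  have hb0 : |d0| ≤ K := by
    have hd0 : d0 = ((πE' - πE) * ((1 - πG') * πG) + (1 - πE') * (πG - πG'))
        / ((1 - πE') * (1 - πG) * πG') := by
      rw [hd0def]
      field_simp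
      ring
    have hnum : |(πE' - πE) * ((1 - πG') * πG) + (1 - πE') * (πG - πG')|
        ≤ |πE - πE'| + |πG - πG'| := by
      have h01 : 0 ≤ (1 - πG') * πG := mul_nonneg (by linarith) hπG0
      have h02 : (1 - πG') * πG ≤ 1 := mul_le_one₀ (by linarith) hπG0 hπG1
      have t1 : |(πE' - πE) * ((1 - πG') * πG)| ≤ |πE - πE'| := by
        rw [abs_mul, abs_sub_comm πE' πE]
        exact mul_le_of_le_one_right (abs_nonneg _)
          (by rw [abs_of_nonneg h01]; exact h02)
      have t2 : |(1 - πE') * (πG - πG')| ≤ |πG - πG'| := by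
        rw [abs_mul]
        exact mul_le_of_le_one_left (abs_nonneg _)
          (by rw [abs_of_nonneg (le_of_lt hE'')]; linarith)
      exact (abs_add_le _ _).trans (add_le_add t1 t2)
    have hden : ε ^ 3 ≤ (1 - πE') * (1 - πG) * πG' := by
      calc ε ^ 3 = ε * ε * ε := by ring
        _ ≤ (1 - πE') * (1 - πG) * πG' :=
            mul_le_mul (mul_le_mul h2 h4 hε0.le hE''.le) h3 hε0.le (by positivity)
    rw [hd0, abs_div, abs_of_pos (by positivity : (0:ℝ) < (1 - πE') * (1 - πG) * πG')]
    rw [hKdef, inv_pow, ← div_eq_inv_mul]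
    exact div_le_div₀ (by positivity) hnum hε3 hden
  -- bound on d2
  have hb2 : |d2| ≤ L := by
    have hd2 : d2 = (πO - πO') / πO' := by rw [hd2def]; field_simp
    rw [hd2, abs_div, abs_of_pos hO', hLdef, ← div_eq_inv_mul]
    exact div_le_div₀ (abs_nonneg _) le_rfl hε0 h5
  -- bound on d3
  have hb3 : |d3| ≤ L := by
    have hd3 : d3 = (πO' - πO) / (1 - πO') := by rw [hd3def]; field_simp; ring
    rw [hd3, abs_div, abs_of_pos hO'', hLdef, ← div_eq_inv_mul, abs_sub_comm]
    exact div_le_div₀ (abs_nonneg _) le_rfl hε0 h6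
  have htri : |P - τ| ≤ |d1| * |μE1| + |d0| * |μE0|
      + (|d2| * |μY1 - μS1| + |d3| * |μY0 - μS0|) := by
    rw [hdecomp]
    calc |d1 * μE1 - d0 * μE0 + (d2 * (μY1 - μS1) - d3 * (μY0 - μS0))|
        ≤ |d1 * μE1 - d0 * μE0| + |d2 * (μY1 - μS1) - d3 * (μY0 - μS0)| := abs_add_le _ _
      _ ≤ (|d1 * μE1| + |d0 * μE0|) + (|d2 * (μY1 - μS1)| + |d3 * (μY0 - μS0)|) := by
          gcongr <;> exact abs_sub _ _
      _ = |d1| * |μE1| + |d0| * |μE0| + (|d2| * |μY1 - μS1| + |d3| * |μY0 - μS0|) := by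
          rw [abs_mul, abs_mul, abs_mul, abs_mul]
  have hfin : |d1| * |μE1| + |d0| * |μE0| + (|d2| * |μY1 - μS1| + |d3| * |μY0 - μS0|)
      ≤ K * (|μE1| + |μE0|) + L * (|μY1 - μS1| + |μY0 - μS0|) := by
    have a1 := mul_le_mul_of_nonneg_right hb1 (abs_nonneg μE1)
    have a0 := mul_le_mul_of_nonneg_right hb0 (abs_nonneg μE0)
    have a2 := mul_le_mul_of_nonneg_right hb2 (abs_nonneg (μY1 - μS1))
    have a3 := mul_le_mul_of_nonneg_right hb3 (abs_nonneg (μY0 - μS0))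
    linarith
  calc |P - τ| ≤ _ := htri
    _ ≤ K * (|μE1| + |μE0|) + L * (|μY1 - μS1| + |μY0 - μS0|) := hfin
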